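/- For nonnegative integers j and positive integers n, \mathrm{Im} \int_0^\pi e^{j e^{i\theta}} \sin(n\theta)\, d\theta = \frac{\pi}{2} \frac{j^n}{n!}. -/

import Mathlib

/-- `rS r n k` is the r-Stirling number of the second kind `S_r(n+r, k+r)`. -/
def rS (r : ℕ) : ℕ → ℕ → ℕ
  | 0, 0 => 1
  | 0, _ + 1 => 0
  | n + 1, 0 => r * rS r n 0
  | n + 1, k + 1 => (k + 1 + r) * rS r n (k + 1) + rS r n k

/-- The r-Stirling number of the second kind `S_r(n,k)`. -/
def rStirling (r n k : ℕ) : ℕ :=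
  if r ≤ n ∧ r ≤ k then rS r (n - r) (k - r) else 0

/-- The r-Bell polynomial `B_{n,r}(x)` as a real function. -/
def rBellPoly (r n : ℕ) (x : ℝ) : ℝ :=
  ∑ k ∈ Finset.range (n + 1), (rS r n k : ℝ) * x ^ k

/-- The r-Bell number `B_{n,r}`. -/
def rBell (r n : ℕ) : ℕ :=
  ∑ k ∈ Finset.range (n + 1), rS r n k


open MeasureTheory

lemma int_cos_mul (c : ℝ) (hc : c ≠ 0) :
    ∫ θ in (0:ℝ)..Real.pi, Real.cos (c * θ) = Real.sin (c * Real.pi) / c := by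
  rw [intervalIntegral.integral_comp_mul_left Real.cos hc]
  simp [integral_cos, smul_eq_mul, div_eq_inv_mul]

lemma sin_orth (m n : ℕ) (hn : 1 ≤ n) :
    ∫ θ in (0:ℝ)..Real.pi, Real.sin (m * θ) * Real.sin (n * θ)
      = if m = n then Real.pi / 2 else 0 := by
  have key : ∀ θ : ℝ, Real.sin (m * θ) * Real.sin (n * θ)
      = (Real.cos (((m:ℝ) - n) * θ) - Real.cos (((m:ℝ) + n) * θ)) / 2 := by
    intro θ
    rw [sub_mul, add_mul, Real.cos_sub, Real.cos_add]
    ring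
  simp_rw [key]
  rw [intervalIntegral.integral_div]
  have h1 : IntervalIntegrable (fun θ => Real.cos (((m:ℝ) - n) * θ)) volume 0 Real.pi :=
    (Real.continuous_cos.comp (continuous_const.mul continuous_id)).intervalIntegrable _ _
  have h2 : IntervalIntegrable (fun θ => Real.cos (((m:ℝ) + n) * θ)) volume 0 Real.pi :=
    (Real.continuous_cos.comp (continuous_const.mul continuous_id)).intervalIntegrable _ _
  rw [intervalIntegral.integral_sub h1 h2]
  have hmn : ((m:ℝ) + n) ≠ 0 := by positivity
  have e2 : ∫ θ in (0:ℝ)..Real.pi, Real.cos (((m:ℝ) + n) * θ) = 0 := by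
    rw [int_cos_mul _ hmn]
    have : Real.sin (((m:ℝ) + n) * Real.pi) = 0 := by
      have := Real.sin_nat_mul_pi (m + n)
      push_cast at this ⊢
      convert this using 2
    rw [this, zero_div]
  by_cases h : m = n
  · subst h
    have e1 : ∫ θ in (0:ℝ)..Real.pi, Real.cos (((m:ℝ) - m) * θ) = Real.pi := by
      simp
    rw [e1, e2, if_pos rfl]
    ring
  · have hmn' : ((m:ℝ) - n) ≠ 0 := by
      intro hc
      exact h (by exact_mod_cast sub_eq_zero.mp hc)
    have e1 : ∫ θ in (0:ℝ)..Real.pi, Real.cos (((m:ℝ) - n) * θ) = 0 := by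
      rw [int_cos_mul _ hmn']
      have : Real.sin (((m:ℝ) - n) * Real.pi) = 0 := by
        have := Real.sin_int_mul_pi ((m:ℤ) - n)
        push_cast at this ⊢
        convert this using 2
      rw [this, zero_div]
    rw [e1, e2, if_neg h]
    ring

open Complex in
theorem callan_integral (j n : ℕ) (hn : 1 ≤ n) :
    (∫ θ in (0:ℝ)..Real.pi,
        Complex.exp ((j : ℂ) * Complex.exp (θ * I)) * (Real.sin (n * θ) : ℂ)).im =
      Real.pi / 2 * (j : ℝ) ^ n / (n.factorial : ℝ) := by
  have hπ : (0:ℝ) ≤ Real.pi := Real.pi_pos.le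
  set μ := volume.restrict (Set.Ioc (0:ℝ) Real.pi) with hμ
  set F : ℕ → ℝ → ℂ := fun m θ =>
    ((j:ℂ) * Complex.exp (θ * I)) ^ m / m.factorial * (Real.sin (n * θ) : ℂ) with hF
  -- pointwise value of F
  have hFval : ∀ (m : ℕ) (θ : ℝ), F m θ =
      (((j:ℝ)^m / m.factorial * Real.cos (m*θ) * Real.sin (n*θ) : ℝ) : ℂ)
        + (((j:ℝ)^m / m.factorial * Real.sin (m*θ) * Real.sin (n*θ) : ℝ) : ℂ) * I := by
    intro m θ
    rw [hF]
    simp only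
    rw [mul_pow, ← Complex.exp_nat_mul,
      show (m:ℂ) * (↑θ * I) = ↑((m:ℝ)*θ) * I by push_cast; ring,
      Complex.exp_mul_I, ← Complex.ofReal_cos, ← Complex.ofReal_sin]
    push_cast
    ring
  have hFim : ∀ (m : ℕ) (θ : ℝ), (F m θ).im
      = (j:ℝ)^m / m.factorial * (Real.sin (m*θ) * Real.sin (n*θ)) := by
    intro m θ
    rw [hFval]
    simp only [Complex.add_im, Complex.ofReal_im, Complex.mul_im, Complex.I_im, Complex.I_re,
      Complex.ofReal_re, mul_one, mul_zero, zero_add, add_zero]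
    ring
  -- continuity / integrability
  have hcont : ∀ m, Continuous (F m) := by
    intro m
    rw [hF]
    fun_prop
  have hint : ∀ m, Integrable (F m) μ := fun m => (hcont m).integrableOn_Ioc
  -- norm bound
  have hle : ∀ (m : ℕ) (θ : ℝ), ‖F m θ‖ ≤ (j:ℝ)^m / m.factorial := by
    intro m θ
    rw [hF]
    simp only
    rw [norm_mul, norm_div, norm_pow, norm_mul]
    have h1 : ‖Complex.exp (↑θ * I)‖ = 1 := by
      rw [Complex.norm_exp]
      simp
    rw [h1]
    simp only [Complex.norm_natCast, Complex.norm_real, mul_one]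
    have hs : ‖Real.sin (n*θ)‖ ≤ 1 := by
      rw [Real.norm_eq_abs]; exact Real.abs_sin_le_one _
    calc (j:ℝ)^m / m.factorial * ‖Real.sin (n*θ)‖
        ≤ (j:ℝ)^m / m.factorial * 1 :=
          mul_le_mul_of_nonneg_left hs (by positivity)
      _ = _ := mul_one _
  -- summability of ∫‖F m‖
  have hμuniv : (μ Set.univ).toReal = Real.pi := by
    rw [hμ, Measure.restrict_apply_univ, Real.volume_Ioc, sub_zero,
      ENNReal.toReal_ofReal hπ]
  have hnorm : Summable fun m => ∫ θ, ‖F m θ‖ ∂μ := by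
    apply Summable.of_nonneg_of_le
      (fun m => integral_nonneg fun θ => norm_nonneg _)
      (fun m => ?_)
      (((Real.summable_pow_div_factorial (j:ℝ)).mul_left Real.pi))
    calc ∫ θ, ‖F m θ‖ ∂μ ≤ ∫ _θ, (j:ℝ)^m / m.factorial ∂μ :=
          integral_mono (hint m).norm (integrable_const _) (fun θ => hle m θ)
      _ = Real.pi * ((j:ℝ)^m / m.factorial) := by
          rw [integral_const, measureReal_def, hμuniv, smul_eq_mul]
  -- pointwise sum
  have hptsum : ∀ θ : ℝ, HasSum (fun m => F m θ)
      (Complex.exp ((j:ℂ) * Complex.exp (θ * I)) * (Real.sin (n * θ) : ℂ)) := by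
    intro θ
    have := (NormedSpace.expSeries_div_hasSum_exp ((j:ℂ) * Complex.exp (θ * I))).mul_right
      ((Real.sin (n * θ) : ℂ))
    rwa [← Complex.exp_eq_exp_ℂ] at this
  -- swap sum and integral
  have hswap : HasSum (fun m => ∫ θ, F m θ ∂μ)
      (∫ θ, Complex.exp ((j:ℂ) * Complex.exp (θ * I)) * (Real.sin (n * θ) : ℂ) ∂μ) := by
    have h := hasSum_integral_of_summable_integral_norm hint hnorm
    have heq : (fun θ : ℝ => ∑' m, F m θ)
        = fun θ : ℝ => Complex.exp ((j:ℂ) * Complex.exp (θ * I)) * (Real.sin (n * θ) : ℂ) :=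
      funext fun θ => (hptsum θ).tsum_eq
    rwa [show (∫ θ, (∑' m, F m θ) ∂μ)
        = ∫ θ, Complex.exp ((j:ℂ) * Complex.exp (θ * I)) * (Real.sin (n * θ) : ℂ) ∂μ by
      rw [heq]] at h
  -- take imaginary parts
  have him : HasSum (fun m => (∫ θ, F m θ ∂μ).im)
      ((∫ θ, Complex.exp ((j:ℂ) * Complex.exp (θ * I)) * (Real.sin (n * θ) : ℂ) ∂μ).im) := by
    have := Complex.imCLM.hasSum hswap
    simpa using this
  -- compute each term
  have hterm : ∀ m : ℕ, (∫ θ, F m θ ∂μ).im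
      = if m = n then (j:ℝ)^n / n.factorial * (Real.pi / 2) else 0 := by
    intro m
    have h1 : (∫ θ, F m θ ∂μ).im = ∫ θ, (F m θ).im ∂μ := (integral_im (hint m)).symm
    rw [h1]
    have h2 : ∫ θ, (F m θ).im ∂μ
        = (j:ℝ)^m / m.factorial
          * ∫ θ in (0:ℝ)..Real.pi, Real.sin ((m:ℝ)*θ) * Real.sin ((n:ℝ)*θ) := by
      rw [intervalIntegral.integral_of_le hπ, ← integral_const_mul]
      exact integral_congr_ae (Filter.Eventually.of_forall fun θ => hFim m θ)
    rw [h2, sin_orth m n hn]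
    by_cases h : m = n
    · subst h; simp
    · simp [h]
  -- final sum
  rw [intervalIntegral.integral_of_le hπ, ← him.tsum_eq]
  calc ∑' m, (∫ θ, F m θ ∂μ).im
      = ∑' m, (if m = n then (j:ℝ)^n / n.factorial * (Real.pi / 2) else 0) :=
        tsum_congr hterm
    _ = (j:ℝ)^n / n.factorial * (Real.pi / 2) := tsum_ite_eq n _
    _ = Real.pi / 2 * (j:ℝ)^n / n.factorial := by ring
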